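/- Let Q ∈ Δ_m have full support (Q_i > 0 for all i), let Π be nonempty with Q ∉ Π, and assume the regularity condition on Π. Let X_1, X_2, … be i.i.d. random variables with distribution Q on the alphabet {1,…,m}, and let T_n ∈ 𝒫_n denote the empirical distribution (type) of (X_1,…,X_n). Then lim_{n→∞} (1/n) ln P(T_n ∈ Π) = −D_KL(Π ‖ Q). -/

import Mathlib

open Filter

noncomputable section

/-- The set of types of length-`n` sequences over an alphabet of size `m`:
probability vectors all of whose coordinates are integer multiples of `1/n`. -/
def typesP (m n : ℕ) : Set (Fin m → ℝ) :=
  {p | p ∈ stdSimplex ℝ (Fin m) ∧ ∀ i, ∃ k : ℕ, p i = (k : ℝ) / (n : ℝ)}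

/-- KL divergence `D_KL(P‖Q) = Σ_i P_i ln(P_i/Q_i)`. -/
def klDiv {m : ℕ} (P Q : Fin m → ℝ) : ℝ :=
  ∑ i, P i * Real.log (P i / Q i)

/-- KL divergence of a set of distributions from `Q` (as an extended real,
so that the infimum over the empty set is `+∞`). -/
def klDivSet {m : ℕ} (S : Set (Fin m → ℝ)) (Q : Fin m → ℝ) : EReal :=
  ⨅ P : S, ((klDiv P.1 Q : ℝ) : EReal)

/-- The set `Π` determined by the `K × m` matrix `A` over the alphabet of size
`m + 1`: probability vectors whose first `m` coordinates satisfy at least one of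
the `K` linear constraints `(A p)_i ≥ 0`. -/
def PiSet {K m : ℕ} (A : Matrix (Fin K) (Fin m) ℝ) : Set (Fin (m + 1) → ℝ) :=
  {p | p ∈ stdSimplex ℝ (Fin (m + 1)) ∧ ∃ i : Fin K, 0 ≤ ∑ j, A i j * p j.castSucc}

/-- The shifted set `Π_{n,ℓ}`: at least one constraint `(A p)_i ≥ ℓ/(n−ℓ)`. -/
def PiSetShift {K m : ℕ} (A : Matrix (Fin K) (Fin m) ℝ) (n ℓ : ℕ) :
    Set (Fin (m + 1) → ℝ) :=
  {p | p ∈ stdSimplex ℝ (Fin (m + 1)) ∧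
    ∃ i : Fin K, (ℓ : ℝ) / ((n : ℝ) - (ℓ : ℝ)) ≤ ∑ j, A i j * p j.castSucc}

/-- The regularity condition: every point of `Π` is a limit of points of the
simplex satisfying some constraint strictly. -/
def RegularPi {K m : ℕ} (A : Matrix (Fin K) (Fin m) ℝ) : Prop :=
  ∀ p ∈ PiSet A, p ∈ closure {q : Fin (m + 1) → ℝ |
    q ∈ stdSimplex ℝ (Fin (m + 1)) ∧ ∃ i : Fin K, 0 < ∑ j, A i j * q j.castSucc}

open ProbabilityTheory

/-- The empirical distribution (type) of the first `n` samples. -/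
def empiricalType {m : ℕ} {Ω : Type*} (Z : ℕ → Ω → Fin m) (n : ℕ) (ω : Ω) :
    Fin m → ℝ :=
  fun a => ((Finset.univ.filter fun j : Fin n => Z j ω = a).card : ℝ) / (n : ℝ)



def cntF {M : ℕ} (n : ℕ) (x : Fin n → Fin M) (a : Fin M) : ℕ :=
  (Finset.univ.filter fun j => x j = a).card

def typF {M : ℕ} (n : ℕ) (x : Fin n → Fin M) : Fin M → ℝ :=
  fun a => (cntF n x a : ℝ) / (n : ℝ)

lemma cntF_le {M n : ℕ} (x : Fin n → Fin M) (a : Fin M) : cntF n x a ≤ n := by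
  simpa [cntF] using (Finset.card_filter_le Finset.univ fun j => x j = a)

lemma sum_cntF {M n : ℕ} (x : Fin n → Fin M) : ∑ a, cntF n x a = n := by
  classical
  unfold cntF
  simpa using (Finset.card_eq_sum_card_fiberwise
    (f := x) (s := Finset.univ) (t := Finset.univ) (fun y _ => Finset.mem_univ _)).symm

lemma prod_comp_cntF {M n : ℕ} (x : Fin n → Fin M) (g : Fin M → ℝ) :
    ∏ j, g (x j) = ∏ a, g a ^ cntF n x a := by
  classical
  rw [← Finset.prod_fiberwise_of_maps_to (g := x) (t := Finset.univ)
      (fun y _ => Finset.mem_univ _) (fun j => g (x j))]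
  refine Finset.prod_congr rfl fun a _ => ?_
  unfold cntF
  rw [Finset.prod_congr rfl (fun j hj => by
    rw [(Finset.mem_filter.mp hj).2])]
  exact Finset.prod_const _

lemma sum_prod_univ {M n : ℕ} (g : Fin M → ℝ) :
    ∑ x : Fin n → Fin M, ∏ j, g (x j) = (∑ a, g a) ^ n := by
  classical
  have h := Finset.prod_univ_sum (t := fun _ : Fin n => (Finset.univ : Finset (Fin M)))
    (f := fun _ a => g a)
  simp only [Fintype.piFinset_univ] at h
  rw [← h, Finset.prod_const, Finset.card_univ, Fintype.card_fin]

lemma typF_mem_simplex {M n : ℕ} (hn : n ≠ 0) (x : Fin n → Fin M) :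
    typF n x ∈ stdSimplex ℝ (Fin M) := by
  constructor
  · intro a; exact div_nonneg (Nat.cast_nonneg _) (Nat.cast_nonneg _)
  · unfold typF
    rw [← Finset.sum_div]
    rw [div_eq_one_iff_eq (by exact_mod_cast hn)]
    exact_mod_cast sum_cntF x


lemma prod_eq_exp {M n : ℕ} (x : Fin n → Fin M) (g : Fin M → ℝ)
    (hg : ∀ a, cntF n x a ≠ 0 → 0 < g a) :
    ∏ j, g (x j) = Real.exp (∑ a, (cntF n x a : ℝ) * Real.log (g a)) := by
  rw [prod_comp_cntF, Real.exp_sum]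
  refine Finset.prod_congr rfl fun a _ => ?_
  by_cases h : cntF n x a = 0
  · simp [h]
  · rw [← Real.log_pow, Real.exp_log (pow_pos (hg a h) _)]

lemma typF_pos_of_cnt {M n : ℕ} (x : Fin n → Fin M) (a : Fin M) (h : cntF n x a ≠ 0)
    (hn : n ≠ 0) : 0 < typF n x a := by
  unfold typF
  apply div_pos
  · exact_mod_cast Nat.pos_of_ne_zero h
  · exact_mod_cast Nat.pos_of_ne_zero hn

/-- n · D(t‖Q) = Σ_a cnt_a (log t_a − log Q_a) for t the type of x. -/
lemma n_mul_klDiv {M n : ℕ} (hn : n ≠ 0) (x : Fin n → Fin M) (Q : Fin M → ℝ)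
    (hQ : ∀ a, 0 < Q a) :
    (n : ℝ) * klDiv (typF n x) Q
      = ∑ a, (cntF n x a : ℝ) * Real.log (typF n x a)
        - ∑ a, (cntF n x a : ℝ) * Real.log (Q a) := by
  rw [klDiv, Finset.mul_sum, ← Finset.sum_sub_distrib]
  refine Finset.sum_congr rfl fun a _ => ?_
  by_cases h : cntF n x a = 0
  · simp [h, typF]
  · have ht : 0 < typF n x a := typF_pos_of_cnt x a h hn
    have hnt : (n : ℝ) * typF n x a = (cntF n x a : ℝ) := by
      have hn' : (n : ℝ) ≠ 0 := by exact_mod_cast hn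
      simp only [typF]
      field_simp
    rw [Real.log_div (ne_of_gt ht) (ne_of_gt (hQ a)), ← mul_assoc, hnt]
    ring

/-- Key identity: ∏ Q(x_j) = exp(−n D(t‖Q)) ∏ t(x_j), t = type of x. -/
lemma prodQ_eq {M n : ℕ} (hn : n ≠ 0) (x : Fin n → Fin M) (Q : Fin M → ℝ)
    (hQ : ∀ a, 0 < Q a) :
    ∏ j, Q (x j)
      = Real.exp (-((n : ℝ) * klDiv (typF n x) Q)) * ∏ j, typF n x (x j) := by
  rw [prod_eq_exp x Q (fun a _ => hQ a),
      prod_eq_exp x (typF n x) (fun a h => typF_pos_of_cnt x a h hn),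
      ← Real.exp_add, n_mul_klDiv hn x Q hQ]
  ring_nf

lemma typF_eq_of_cnt {M n : ℕ} {x y : Fin n → Fin M}
    (h : ∀ a, cntF n x a = cntF n y a) : typF n x = typF n y := by
  funext a; unfold typF; rw [h a]

lemma typF_nonneg {M n : ℕ} (x : Fin n → Fin M) (a : Fin M) : 0 ≤ typF n x a :=
  div_nonneg (Nat.cast_nonneg _) (Nat.cast_nonneg _)

lemma sum_typF {M n : ℕ} (hn : n ≠ 0) (x : Fin n → Fin M) : ∑ a, typF n x a = 1 :=
  (typF_mem_simplex hn x).2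

open Classical in
lemma sanov_upper {M n : ℕ} (hn : n ≠ 0) (Q : Fin M → ℝ) (hQ : ∀ a, 0 < Q a)
    (Pi' : Set (Fin M → ℝ)) (D : ℝ)
    (hD : ∀ p ∈ Pi', D ≤ klDiv p Q) :
    ∑ x ∈ Finset.univ.filter (fun x : Fin n → Fin M => typF n x ∈ Pi'), ∏ j, Q (x j)
      ≤ ((n : ℝ) + 1) ^ M * Real.exp (-((n : ℝ) * D)) := by
  set s := Finset.univ.filter (fun x : Fin n → Fin M => typF n x ∈ Pi') with hs
  set c' : (Fin n → Fin M) → (Fin M → Fin (n+1)) :=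
    fun x a => ⟨cntF n x a, Nat.lt_succ_of_le (cntF_le x a)⟩ with hc'
  rw [← Finset.sum_fiberwise_of_maps_to (g := c') (t := Finset.univ)
      (fun y _ => Finset.mem_univ _) (fun x => ∏ j, Q (x j))]
  have key : ∀ k : Fin M → Fin (n+1),
      ∑ x ∈ s.filter (fun x => c' x = k), ∏ j, Q (x j) ≤ Real.exp (-((n : ℝ) * D)) := by
    intro k
    rcases Finset.eq_empty_or_nonempty (s.filter (fun x => c' x = k)) with he | ⟨x0, hx0⟩
    · rw [he, Finset.sum_empty]; positivity
    · have hx0' := Finset.mem_filter.mp hx0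
      have hx0s := Finset.mem_filter.mp hx0'.1
      have ht0 : typF n x0 ∈ Pi' := hx0s.2
      set t0 := typF n x0 with hht0
      have hsame : ∀ x ∈ s.filter (fun x => c' x = k), typF n x = t0 := by
        intro x hx
        have hx' := Finset.mem_filter.mp hx
        refine typF_eq_of_cnt fun a => ?_
        have := congrFun hx'.2 a
        have h2 := congrFun hx0'.2 a
        rw [← h2] at this
        simpa [hc'] using congrArg Fin.val this
      calc ∑ x ∈ s.filter (fun x => c' x = k), ∏ j, Q (x j)
          = ∑ x ∈ s.filter (fun x => c' x = k),
              Real.exp (-((n : ℝ) * klDiv t0 Q)) * ∏ j, t0 (x j) := by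
            refine Finset.sum_congr rfl fun x hx => ?_
            rw [← hsame x hx]
            exact prodQ_eq hn x Q hQ
        _ ≤ ∑ x ∈ s.filter (fun x => c' x = k),
              Real.exp (-((n : ℝ) * D)) * ∏ j, t0 (x j) := by
            refine Finset.sum_le_sum fun x hx => ?_
            have hprod : 0 ≤ ∏ j, t0 (x j) :=
              Finset.prod_nonneg fun j _ => typF_nonneg x0 (x j)
            have : Real.exp (-((n : ℝ) * klDiv t0 Q)) ≤ Real.exp (-((n : ℝ) * D)) := by
              apply Real.exp_le_exp.mpr
              have := hD t0 ht0
              have hn' : (0 : ℝ) ≤ n := Nat.cast_nonneg _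
              nlinarith
            exact mul_le_mul_of_nonneg_right this hprod
        _ = Real.exp (-((n : ℝ) * D)) * ∑ x ∈ s.filter (fun x => c' x = k), ∏ j, t0 (x j) := by
            rw [Finset.mul_sum]
        _ ≤ Real.exp (-((n : ℝ) * D)) * ∑ x : Fin n → Fin M, ∏ j, t0 (x j) := by
            apply mul_le_mul_of_nonneg_left _ (Real.exp_nonneg _)
            apply Finset.sum_le_sum_of_subset_of_nonneg (Finset.subset_univ _)
            intro x _ _
            exact Finset.prod_nonneg fun j _ => typF_nonneg x0 (x j)
        _ = Real.exp (-((n : ℝ) * D)) := by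
            rw [sum_prod_univ, sum_typF hn x0, one_pow, mul_one]
  calc ∑ k : Fin M → Fin (n+1), ∑ x ∈ s.filter (fun x => c' x = k), ∏ j, Q (x j)
      ≤ ∑ _k : Fin M → Fin (n+1), Real.exp (-((n : ℝ) * D)) :=
        Finset.sum_le_sum fun k _ => key k
    _ = ((n : ℝ) + 1) ^ M * Real.exp (-((n : ℝ) * D)) := by
        rw [Finset.sum_const, Finset.card_univ, Fintype.card_fun, Fintype.card_fin,
          Fintype.card_fin, nsmul_eq_mul]
        norm_num
lemma sum_prod_general {M n : ℕ} (h : Fin n → Fin M → ℝ) :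
    ∑ x : Fin n → Fin M, ∏ l, h l (x l) = ∏ l, ∑ b, h l b := by
  classical
  have := Finset.prod_univ_sum (t := fun _ : Fin n => (Finset.univ : Finset (Fin M)))
    (f := fun l b => h l b)
  simp only [Fintype.piFinset_univ] at this
  rw [this]

lemma inner_cov {M n : ℕ} (q Y : Fin M → ℝ) (hq1 : ∑ b, q b = 1)
    (hEY : ∑ b, q b * Y b = 0) (j k : Fin n) :
    ∑ x : Fin n → Fin M, (∏ l, q (x l)) * (Y (x j) * Y (x k))
      = if j = k then ∑ b, q b * Y b ^ 2 else 0 := by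
  classical
  by_cases hjk : j = k
  · subst hjk
    rw [if_pos rfl]
    have hprod : ∀ x : Fin n → Fin M,
        (∏ l, q (x l)) * (Y (x j) * Y (x j))
          = ∏ l, (q (x l) * (if l = j then Y (x l) ^ 2 else 1)) := by
      intro x
      rw [Finset.prod_mul_distrib]
      congr 1
      rw [Finset.prod_ite_eq' Finset.univ j (fun l => Y (x l) ^ 2), if_pos (Finset.mem_univ _)]
      ring
    rw [Finset.sum_congr rfl (fun x _ => hprod x),
      sum_prod_general (fun l b => q b * (if l = j then Y b ^ 2 else 1))]
    rw [Finset.prod_eq_single j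
      (fun l _ hlj => by simp only [if_neg hlj, mul_one]; exact hq1)
      (fun h => absurd (Finset.mem_univ j) h)]
    simp
  · rw [if_neg hjk]
    have hprod : ∀ x : Fin n → Fin M,
        (∏ l, q (x l)) * (Y (x j) * Y (x k))
          = ∏ l, (q (x l) * (if l = j then Y (x l) else 1) * (if l = k then Y (x l) else 1)) := by
      intro x
      rw [Finset.prod_mul_distrib, Finset.prod_mul_distrib]
      rw [Finset.prod_ite_eq' Finset.univ j (fun l => Y (x l)), if_pos (Finset.mem_univ _)]
      rw [Finset.prod_ite_eq' Finset.univ k (fun l => Y (x l)), if_pos (Finset.mem_univ _)]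
      ring
    rw [Finset.sum_congr rfl (fun x _ => hprod x),
      sum_prod_general (fun l b => q b * (if l = j then Y b else 1) * (if l = k then Y b else 1))]
    apply Finset.prod_eq_zero (Finset.mem_univ j)
    have h2 : ∀ b : Fin M, q b * (if (j : Fin n) = j then Y b else 1) * (if (j : Fin n) = k then Y b else 1)
        = q b * Y b := by
      intro b; rw [if_pos rfl, if_neg hjk, mul_one]
    rw [Finset.sum_congr rfl (fun b _ => h2 b), hEY]

lemma typF_sub_eq {M n : ℕ} (hn : n ≠ 0) (x : Fin n → Fin M) (q : Fin M → ℝ) (a : Fin M) :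
    typF n x a - q a = (1 / (n : ℝ)) * ∑ j, ((if x j = a then (1:ℝ) else 0) - q a) := by
  classical
  have hcnt : ((cntF n x a : ℝ)) = ∑ j : Fin n, (if x j = a then (1:ℝ) else 0) := by
    unfold cntF
    rw [Finset.card_filter]
    push_cast
    rfl
  have hnR : (n : ℝ) ≠ 0 := by exact_mod_cast hn
  rw [Finset.sum_sub_distrib, ← hcnt, Finset.sum_const, Finset.card_univ, Fintype.card_fin]
  unfold typF
  field_simp
  try ring

lemma variance_le {M n : ℕ} (hn : n ≠ 0) (q : Fin M → ℝ)
    (hq : q ∈ stdSimplex ℝ (Fin M)) (a : Fin M) :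
    ∑ x : Fin n → Fin M, (∏ l, q (x l)) * (typF n x a - q a) ^ 2 ≤ 1 / (n : ℝ) := by
  classical
  set Y : Fin M → ℝ := fun b => (if b = a then (1:ℝ) else 0) - q a with hY
  have hq1 : ∑ b, q b = 1 := hq.2
  have hqa0 : 0 ≤ q a := hq.1 a
  have hqa1 : q a ≤ 1 := by
    rw [← hq1]
    exact Finset.single_le_sum (fun b _ => hq.1 b) (Finset.mem_univ a)
  have hEY : ∑ b, q b * Y b = 0 := by
    simp only [hY, mul_sub]
    rw [Finset.sum_sub_distrib]
    have h1 : ∑ b, q b * (if b = a then (1:ℝ) else 0) = q a := by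
      rw [Finset.sum_congr rfl (fun b _ => by
        rw [mul_ite, mul_one, mul_zero])]
      simp
    rw [h1, ← Finset.sum_mul, hq1, one_mul, sub_self]
  have hv : ∑ b, q b * Y b ^ 2 ≤ 1 := by
    calc ∑ b, q b * Y b ^ 2 ≤ ∑ b, q b := by
          refine Finset.sum_le_sum fun b _ => ?_
          have hYb : Y b ^ 2 ≤ 1 := by
            simp only [hY]
            by_cases hb : b = a
            · rw [if_pos hb]; nlinarith
            · rw [if_neg hb]; nlinarith
          nlinarith [hq.1 b]
      _ = 1 := hq1
  have hnR : (0 : ℝ) < n := by exact_mod_cast Nat.pos_of_ne_zero hn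
  have expand : ∀ x : Fin n → Fin M,
      (∏ l, q (x l)) * (typF n x a - q a) ^ 2
        = (1 / (n:ℝ)^2) * ∑ j, ∑ k, (∏ l, q (x l)) * (Y (x j) * Y (x k)) := by
    intro x
    rw [typF_sub_eq hn x q a]
    have hYs : (∑ j : Fin n, ((if x j = a then (1:ℝ) else 0) - q a)) = ∑ j, Y (x j) := by
      refine Finset.sum_congr rfl fun j _ => by simp [hY]
    rw [hYs]
    have h2 : ∑ j : Fin n, ∑ k : Fin n, (∏ l, q (x l)) * (Y (x j) * Y (x k))
        = (∏ l, q (x l)) * ((∑ j, Y (x j)) * (∑ k, Y (x k))) := by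
      rw [Finset.sum_mul_sum]
      simp only [Finset.mul_sum]
    rw [h2]
    ring
  calc ∑ x : Fin n → Fin M, (∏ l, q (x l)) * (typF n x a - q a) ^ 2
      = (1/(n:ℝ)^2) * ∑ x : Fin n → Fin M, ∑ j, ∑ k, (∏ l, q (x l)) * (Y (x j) * Y (x k)) := by
        rw [Finset.mul_sum]
        exact Finset.sum_congr rfl fun x _ => expand x
    _ = (1/(n:ℝ)^2) * ∑ j : Fin n, ∑ k : Fin n,
          ∑ x : Fin n → Fin M, (∏ l, q (x l)) * (Y (x j) * Y (x k)) := by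
        congr 1
        rw [Finset.sum_comm]
        exact Finset.sum_congr rfl fun j _ => Finset.sum_comm
    _ = (1/(n:ℝ)^2) * ∑ j : Fin n, ∑ k : Fin n,
          (if j = k then ∑ b, q b * Y b ^ 2 else 0) := by
        congr 1
        exact Finset.sum_congr rfl fun j _ => Finset.sum_congr rfl fun k _ =>
          inner_cov q Y hq1 hEY j k
    _ = (1/(n:ℝ)^2) * ((n : ℝ) * ∑ b, q b * Y b ^ 2) := by
        congr 1
        rw [Finset.sum_congr rfl (fun j (_ : j ∈ Finset.univ) =>
          Finset.sum_ite_eq Finset.univ j (fun _ => ∑ b, q b * Y b ^ 2))]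
        simp [Finset.sum_const, Finset.card_univ]
    _ ≤ 1 / (n : ℝ) := by
        rw [div_mul_eq_mul_div, one_mul, div_le_div_iff₀ (by positivity) hnR]
        nlinarith [hv, hnR, sq_nonneg ((n:ℝ))]
open Classical in
lemma good_mass {M n : ℕ} (hn : n ≠ 0) (q : Fin M → ℝ)
    (hq : q ∈ stdSimplex ℝ (Fin M)) (δ : ℝ) (hδ : 0 < δ) :
    1 - (M : ℝ) / ((n : ℝ) * δ ^ 2)
      ≤ ∑ x ∈ Finset.univ.filter (fun x : Fin n → Fin M => ∀ a, |typF n x a - q a| ≤ δ),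
          ∏ l, q (x l) := by
  have hq0 : ∀ b, 0 ≤ q b := hq.1
  have hprod0 : ∀ x : Fin n → Fin M, 0 ≤ ∏ l, q (x l) :=
    fun x => Finset.prod_nonneg fun l _ => hq0 (x l)
  have htotal : ∑ x : Fin n → Fin M, ∏ l, q (x l) = 1 := by
    rw [sum_prod_univ, hq.2, one_pow]
  set good : Finset (Fin n → Fin M) :=
    Finset.univ.filter (fun x : Fin n → Fin M => ∀ a, |typF n x a - q a| ≤ δ) with hgood
  set bad : Finset (Fin n → Fin M) :=
    Finset.univ.filter (fun x : Fin n → Fin M => ¬ ∀ a, |typF n x a - q a| ≤ δ) with hbadd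
  have hsplit : (∑ x ∈ good, ∏ l, q (x l)) + (∑ x ∈ bad, ∏ l, q (x l)) = 1 := by
    rw [hgood, hbadd, Finset.sum_filter_add_sum_filter_not, htotal]
  have hbad : ∑ x ∈ bad, ∏ l, q (x l) ≤ (M : ℝ) / ((n : ℝ) * δ ^ 2) := by
    have step1 : ∑ x ∈ bad, ∏ l, q (x l)
        ≤ ∑ x ∈ bad, ∑ a : Fin M, (if δ < |typF n x a - q a| then ∏ l, q (x l) else 0) := by
      refine Finset.sum_le_sum fun x hx => ?_
      have hx' := (Finset.mem_filter.mp hx).2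
      push_neg at hx'
      obtain ⟨a0, ha0⟩ := hx'
      calc ∏ l, q (x l)
          = ∑ a : Fin M, (if a = a0 then ∏ l, q (x l) else 0) := by
            rw [Finset.sum_ite_eq' Finset.univ a0 (fun _ => ∏ l, q (x l)),
              if_pos (Finset.mem_univ _)]
        _ ≤ ∑ a : Fin M, (if δ < |typF n x a - q a| then ∏ l, q (x l) else 0) := by
            refine Finset.sum_le_sum fun a _ => ?_
            by_cases h : a = a0
            · subst h
              rw [if_pos rfl, if_pos ha0]
            · rw [if_neg h]
              split
              · exact hprod0 x
              · exact le_refl 0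
    have step2 : ∀ a : Fin M,
        ∑ x : Fin n → Fin M, (if δ < |typF n x a - q a| then ∏ l, q (x l) else 0)
          ≤ 1 / ((n : ℝ) * δ ^ 2) := by
      intro a
      have hle : ∀ x : Fin n → Fin M,
          (if δ < |typF n x a - q a| then ∏ l, q (x l) else 0)
            ≤ (∏ l, q (x l)) * (typF n x a - q a) ^ 2 / δ ^ 2 := by
        intro x
        split
        · rename_i h
          rw [le_div_iff₀ (by positivity)]
          have h2 : δ ^ 2 ≤ (typF n x a - q a) ^ 2 := by
            have := le_of_lt h
            nlinarith [abs_nonneg (typF n x a - q a), sq_abs (typF n x a - q a), hδ]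
          nlinarith [hprod0 x]
        · exact div_nonneg (mul_nonneg (hprod0 x) (sq_nonneg _)) (sq_nonneg δ)
      calc ∑ x : Fin n → Fin M, (if δ < |typF n x a - q a| then ∏ l, q (x l) else 0)
          ≤ ∑ x : Fin n → Fin M, (∏ l, q (x l)) * (typF n x a - q a) ^ 2 / δ ^ 2 :=
            Finset.sum_le_sum fun x _ => hle x
        _ = (∑ x : Fin n → Fin M, (∏ l, q (x l)) * (typF n x a - q a) ^ 2) / δ ^ 2 := by
            rw [Finset.sum_div]
        _ ≤ (1 / (n : ℝ)) / δ ^ 2 :=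
            div_le_div_of_nonneg_right (variance_le hn q hq a) (by positivity)
        _ = 1 / ((n : ℝ) * δ ^ 2) := by rw [div_div]
    calc ∑ x ∈ bad, ∏ l, q (x l)
        ≤ ∑ x ∈ bad, ∑ a : Fin M, (if δ < |typF n x a - q a| then ∏ l, q (x l) else 0) := step1
      _ ≤ ∑ x : Fin n → Fin M,
            ∑ a : Fin M, (if δ < |typF n x a - q a| then ∏ l, q (x l) else 0) := by
          apply Finset.sum_le_sum_of_subset_of_nonneg (Finset.subset_univ _)
          intro x _ _
          refine Finset.sum_nonneg fun a _ => ?_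
          split
          · exact hprod0 x
          · exact le_refl 0
      _ = ∑ a : Fin M,
            ∑ x : Fin n → Fin M, (if δ < |typF n x a - q a| then ∏ l, q (x l) else 0) :=
          Finset.sum_comm
      _ ≤ ∑ _a : Fin M, 1 / ((n : ℝ) * δ ^ 2) := Finset.sum_le_sum fun a _ => step2 a
      _ = (M : ℝ) / ((n : ℝ) * δ ^ 2) := by
          rw [Finset.sum_const, Finset.card_univ, Fintype.card_fin, nsmul_eq_mul]
          ring
  linarith

open Classical in
lemma sanov_lower {M n : ℕ} (hn : n ≠ 0) (Q q : Fin M → ℝ) (hQ : ∀ a, 0 < Q a)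
    (hqs : q ∈ stdSimplex ℝ (Fin M)) (hqpos : ∀ a, 0 < q a)
    (Pi' : Set (Fin M → ℝ)) (δ : ℝ) (hδ : 0 < δ)
    (hU : ∀ t : Fin M → ℝ, t ∈ stdSimplex ℝ (Fin M) → (∀ a, |t a - q a| ≤ δ) → t ∈ Pi')
    (ε : ℝ)
    (hδε : δ * ∑ a, |Real.log (q a / Q a)| ≤ ε) :
    (1 - (M : ℝ) / ((n : ℝ) * δ ^ 2)) * Real.exp (-((n : ℝ) * (klDiv q Q + ε)))
      ≤ ∑ x ∈ Finset.univ.filter (fun x : Fin n → Fin M => typF n x ∈ Pi'),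
          ∏ j, Q (x j) := by
  set good : Finset (Fin n → Fin M) :=
    Finset.univ.filter (fun x : Fin n → Fin M => ∀ a, |typF n x a - q a| ≤ δ) with hgood
  have hsub : good ⊆ Finset.univ.filter (fun x : Fin n → Fin M => typF n x ∈ Pi') := by
    intro x hx
    rw [Finset.mem_filter]
    refine ⟨Finset.mem_univ _, hU _ (typF_mem_simplex hn x) ?_⟩
    exact (Finset.mem_filter.mp hx).2
  have hkey : ∀ x ∈ good,
      Real.exp (-((n : ℝ) * (klDiv q Q + ε))) * ∏ j, q (x j) ≤ ∏ j, Q (x j) := by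
    intro x hx
    have hxg := (Finset.mem_filter.mp hx).2
    have hprodQ : ∏ j, Q (x j)
        = Real.exp (∑ a, (cntF n x a : ℝ) * Real.log (Q a)) :=
      prod_eq_exp x Q (fun a _ => hQ a)
    have hprodq : ∏ j, q (x j)
        = Real.exp (∑ a, (cntF n x a : ℝ) * Real.log (q a)) :=
      prod_eq_exp x q (fun a _ => hqpos a)
    have hnR : (n : ℝ) ≠ 0 := by exact_mod_cast hn
    have hcnt : ∀ a, (cntF n x a : ℝ) = (n : ℝ) * typF n x a := by
      intro a; unfold typF; field_simp
    have hiden : ∑ a, (cntF n x a : ℝ) * Real.log (Q a)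
        = ∑ a, (cntF n x a : ℝ) * Real.log (q a)
          - (n : ℝ) * ∑ a, typF n x a * Real.log (q a / Q a) := by
      rw [Finset.mul_sum, ← Finset.sum_sub_distrib]
      refine Finset.sum_congr rfl fun a _ => ?_
      rw [Real.log_div (ne_of_gt (hqpos a)) (ne_of_gt (hQ a)), hcnt a]
      ring
    have hbound : ∑ a, typF n x a * Real.log (q a / Q a) ≤ klDiv q Q + ε := by
      have : ∑ a, typF n x a * Real.log (q a / Q a)
          = klDiv q Q + ∑ a, (typF n x a - q a) * Real.log (q a / Q a) := by
        rw [klDiv, ← Finset.sum_add_distrib]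
        exact Finset.sum_congr rfl fun a _ => by ring
      rw [this]
      have h2 : ∑ a, (typF n x a - q a) * Real.log (q a / Q a)
          ≤ δ * ∑ a, |Real.log (q a / Q a)| := by
        rw [Finset.mul_sum]
        refine Finset.sum_le_sum fun a _ => ?_
        calc (typF n x a - q a) * Real.log (q a / Q a)
            ≤ |(typF n x a - q a) * Real.log (q a / Q a)| := le_abs_self _
          _ = |typF n x a - q a| * |Real.log (q a / Q a)| := abs_mul _ _
          _ ≤ δ * |Real.log (q a / Q a)| :=
              mul_le_mul_of_nonneg_right (hxg a) (abs_nonneg _)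
      linarith
    rw [hprodQ, hprodq, ← Real.exp_add, hiden, Real.exp_le_exp]
    have hmul : (n : ℝ) * ∑ a, typF n x a * Real.log (q a / Q a)
        ≤ (n : ℝ) * (klDiv q Q + ε) :=
      mul_le_mul_of_nonneg_left hbound (Nat.cast_nonneg n)
    linarith
  calc (1 - (M : ℝ) / ((n : ℝ) * δ ^ 2)) * Real.exp (-((n : ℝ) * (klDiv q Q + ε)))
      ≤ (∑ x ∈ good, ∏ j, q (x j)) * Real.exp (-((n : ℝ) * (klDiv q Q + ε))) :=
        mul_le_mul_of_nonneg_right (good_mass hn q hqs δ hδ) (Real.exp_nonneg _)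
    _ = ∑ x ∈ good, Real.exp (-((n : ℝ) * (klDiv q Q + ε))) * ∏ j, q (x j) := by
        rw [Finset.sum_mul]
        exact Finset.sum_congr rfl fun x _ => mul_comm _ _
    _ ≤ ∑ x ∈ good, ∏ j, Q (x j) := Finset.sum_le_sum hkey
    _ ≤ ∑ x ∈ Finset.univ.filter (fun x : Fin n → Fin M => typF n x ∈ Pi'),
          ∏ j, Q (x j) := by
        apply Finset.sum_le_sum_of_subset_of_nonneg hsub
        intro x _ _
        exact Finset.prod_nonneg fun j _ => (hQ (x j)).le

open ProbabilityTheory in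
open Classical in
lemma measure_type_event {M : ℕ} {Ω : Type*} [MeasurableSpace Ω]
    (P : MeasureTheory.Measure Ω) [MeasureTheory.IsProbabilityMeasure P]
    (Z : ℕ → Ω → Fin M) (hmeas : ∀ i, Measurable (Z i))
    (hindep : iIndepFun Z P)
    (Q : Fin M → ℝ) (hQ0 : ∀ a, 0 ≤ Q a)
    (hdist : ∀ i a, P {ω | Z i ω = a} = ENNReal.ofReal (Q a))
    (S : Set (Fin M → ℝ)) (n : ℕ) :
    P {ω | typF n (fun j : Fin n => Z j ω) ∈ S}
      = ENNReal.ofReal (∑ x ∈ Finset.univ.filter (fun x : Fin n → Fin M => typF n x ∈ S),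
          ∏ j, Q (x j)) := by
  set s := Finset.univ.filter (fun x : Fin n → Fin M => typF n x ∈ S) with hs
  set A : (Fin n → Fin M) → Set Ω := fun x => {ω | ∀ j : Fin n, Z j ω = x j} with hA
  have hAmeas : ∀ x, MeasurableSet (A x) := by
    intro x
    have : A x = ⋂ j : Fin n, (Z j) ⁻¹' {x j} := by
      ext ω; simp [hA, Set.mem_iInter]
    rw [this]
    exact MeasurableSet.iInter fun j => (hmeas j) (measurableSet_singleton _)
  have hevent : {ω | typF n (fun j : Fin n => Z j ω) ∈ S} = ⋃ x ∈ s, A x := by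
    ext ω
    simp only [Set.mem_setOf_eq, Set.mem_iUnion]
    constructor
    · intro h
      refine ⟨fun j => Z j ω, ?_, fun j => rfl⟩
      rw [hs, Finset.mem_filter]
      exact ⟨Finset.mem_univ _, h⟩
    · rintro ⟨x, hx, hωx⟩
      have : (fun j : Fin n => Z j ω) = x := funext hωx
      rw [this]
      exact (Finset.mem_filter.mp hx).2
  have hdisj : (↑s : Set (Fin n → Fin M)).PairwiseDisjoint A := by
    intro x _ y _ hxy
    apply Set.disjoint_left.mpr
    intro ω hωx hωy
    exact hxy (funext fun j => (hωx j).symm.trans (hωy j))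
  have hPA : ∀ x : Fin n → Fin M, P (A x) = ∏ j : Fin n, ENNReal.ofReal (Q (x j)) := by
    intro x
    set sets : ℕ → Set (Fin M) := fun i => if h : i < n then {x ⟨i, h⟩} else Set.univ
      with hsets
    have hAx : A x = ⋂ i ∈ Finset.range n, Z i ⁻¹' sets i := by
      ext ω
      simp only [hA, Set.mem_setOf_eq, Set.mem_iInter, Finset.mem_range, Set.mem_preimage]
      constructor
      · intro h i hi
        rw [hsets]
        simp only [dif_pos hi]
        exact h ⟨i, hi⟩
      · intro h j
        have := h (j : ℕ) j.isLt
        rw [hsets] at this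
        simp only [dif_pos j.isLt] at this
        simpa using this
    have hind := (ProbabilityTheory.iIndepFun_iff_measure_inter_preimage_eq_mul.mp hindep)
      (Finset.range n) (sets := sets)
      (fun i _ => by
        show MeasurableSet (if h : i < n then {x ⟨i, h⟩} else Set.univ)
        by_cases h : i < n
        · rw [dif_pos h]; exact measurableSet_singleton _
        · rw [dif_neg h]; exact MeasurableSet.univ)
    rw [hAx, hind]
    rw [← Fin.prod_univ_eq_prod_range (fun i => P (Z i ⁻¹' sets i)) n]
    refine Finset.prod_congr rfl fun j _ => ?_
    have h1 : sets (j : ℕ) = {x j} := by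
      rw [hsets]
      simp only [dif_pos j.isLt]
    rw [h1]
    have h2 : Z (j : ℕ) ⁻¹' {x j} = {ω | Z (j : ℕ) ω = x j} := by
      ext ω; simp
    rw [h2, hdist]
  rw [hevent, MeasureTheory.measure_biUnion_finset hdisj (fun x _ => hAmeas x)]
  rw [Finset.sum_congr rfl fun x _ => hPA x]
  rw [ENNReal.ofReal_sum_of_nonneg (fun x _ =>
    Finset.prod_nonneg fun j _ => hQ0 (x j))]
  refine Finset.sum_congr rfl fun x _ => ?_
  rw [ENNReal.ofReal_prod_of_nonneg (fun j _ => hQ0 (x j))]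

lemma klDiv_eq_sub {M : ℕ} (Q : Fin M → ℝ) (hQ : ∀ a, 0 < Q a) :
    (fun p : Fin M → ℝ => klDiv p Q)
      = fun p => ∑ i, (p i * Real.log (p i) - p i * Real.log (Q i)) := by
  funext p
  rw [klDiv]
  refine Finset.sum_congr rfl fun i _ => ?_
  by_cases h : p i = 0
  · simp [h]
  · rw [Real.log_div h (ne_of_gt (hQ i))]
    ring

lemma klDiv_continuous {M : ℕ} (Q : Fin M → ℝ) (hQ : ∀ a, 0 < Q a) :
    Continuous (fun p : Fin M → ℝ => klDiv p Q) := by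
  rw [klDiv_eq_sub Q hQ]
  refine continuous_finset_sum _ fun i _ => ?_
  exact (Real.continuous_mul_log.comp (continuous_apply i)).sub
    ((continuous_apply i).mul continuous_const)

lemma klDiv_nonneg' {M : ℕ} (p Q : Fin M → ℝ) (hp : p ∈ stdSimplex ℝ (Fin M))
    (hQs : ∑ a, Q a = 1) (hQ : ∀ a, 0 < Q a) : 0 ≤ klDiv p Q := by
  have key : ∀ i, p i - Q i ≤ p i * Real.log (p i / Q i) := by
    intro i
    by_cases h : p i = 0
    · rw [h]; simp; exact (hQ i).le
    · have hpi : 0 < p i := lt_of_le_of_ne (hp.1 i) (Ne.symm h)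
      have hlog : Real.log (Q i / p i) ≤ Q i / p i - 1 :=
        Real.log_le_sub_one_of_pos (div_pos (hQ i) hpi)
      have hinv : Real.log (p i / Q i) = - Real.log (Q i / p i) := by
        rw [Real.log_div h (ne_of_gt (hQ i)), Real.log_div (ne_of_gt (hQ i)) h]
        ring
      rw [hinv]
      have h2 : 1 - Q i / p i ≤ - Real.log (Q i / p i) := by linarith
      calc p i - Q i = p i * (1 - Q i / p i) := by field_simp
        _ ≤ p i * (- Real.log (Q i / p i)) :=
            mul_le_mul_of_nonneg_left h2 hpi.le
  calc (0:ℝ) = ∑ i, (p i - Q i) := by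
        rw [Finset.sum_sub_distrib, hp.2, hQs, sub_self]
    _ ≤ ∑ i, p i * Real.log (p i / Q i) := Finset.sum_le_sum fun i _ => key i
    _ = klDiv p Q := by rw [klDiv]

open Filter in
lemma tendsto_log_succ_div (C : ℝ) :
    Tendsto (fun n : ℕ => C * Real.log ((n : ℝ) + 1) / n) atTop (nhds 0) := by
  have h1 : Tendsto (fun n : ℕ => ((n : ℝ) + 1)) atTop atTop :=
    tendsto_atTop_add_const_right _ 1 tendsto_natCast_atTop_atTop
  have h2 : Tendsto (fun n : ℕ => Real.log ((n : ℝ) + 1) / ((n : ℝ) + 1)) atTop (nhds 0) :=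
    (Real.isLittleO_log_id_atTop.tendsto_div_nhds_zero).comp h1
  have h3 : Tendsto (fun n : ℕ => ((n : ℝ) + 1) / (n : ℝ)) atTop (nhds 1) := by
    have h4 : Tendsto (fun n : ℕ => 1 + 1 / (n : ℝ)) atTop (nhds (1 + 0)) :=
      tendsto_const_nhds.add tendsto_one_div_atTop_nhds_zero_nat
    rw [add_zero] at h4
    apply h4.congr'
    filter_upwards [eventually_ge_atTop 1] with n hn
    have hn0 : (n : ℝ) ≠ 0 := by
      have : (1:ℝ) ≤ (n:ℝ) := by exact_mod_cast hn
      linarith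
    field_simp
  have h5 := (h2.mul h3).const_mul C
  rw [zero_mul, mul_zero] at h5
  apply h5.congr'
  filter_upwards [eventually_ge_atTop 1] with n hn
  have hn0 : (n : ℝ) ≠ 0 := by
    have : (1:ℝ) ≤ (n:ℝ) := by exact_mod_cast hn
    linarith
  have hn1 : ((n : ℝ) + 1) ≠ 0 := by positivity
  field_simp
  try ring

set_option maxHeartbeats 1000000 in
/-- Sanov-type result: for i.i.d. samples with full-support
distribution `Q ∉ Π`, `Π` nonempty and regular,
`lim_{n→∞} (1/n) ln P(T_n ∈ Π) = −D_KL(Π‖Q)`. -/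
theorem sanov_error_exponent
    {K m : ℕ} (A : Matrix (Fin K) (Fin m) ℝ)
    (Q : Fin (m + 1) → ℝ) (hQ : Q ∈ stdSimplex ℝ (Fin (m + 1)))
    (hQpos : ∀ i, 0 < Q i)
    (hne : (PiSet A).Nonempty) (hQnot : Q ∉ PiSet A)
    (hreg : RegularPi A)
    {Ω : Type*} [MeasurableSpace Ω] (P : MeasureTheory.Measure Ω)
    [MeasureTheory.IsProbabilityMeasure P]
    (Z : ℕ → Ω → Fin (m + 1))
    (hmeas : ∀ i, Measurable (Z i))
    (hindep : iIndepFun Z P)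
    (hdist : ∀ (i : ℕ) (a : Fin (m + 1)), P {ω | Z i ω = a} = ENNReal.ofReal (Q a)) :
    Tendsto
      (fun n : ℕ => (1 / (n : ℝ)) *
        Real.log ((P {ω | empiricalType Z n ω ∈ PiSet A}).toReal))
      atTop
      (nhds (-(sInf ((fun p => klDiv p Q) '' PiSet A)))) := by
  classical
  set D : ℝ := sInf ((fun p => klDiv p Q) '' PiSet A) with hDdef
  have himg_ne : ((fun p => klDiv p Q) '' PiSet A).Nonempty := hne.image _
  have hQsum : ∑ a, Q a = 1 := hQ.2
  have hbdd : BddBelow ((fun p => klDiv p Q) '' PiSet A) := by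
    refine ⟨0, ?_⟩
    rintro y ⟨p, hp, rfl⟩
    exact klDiv_nonneg' p Q hp.1 hQsum hQpos
  have hDle : ∀ p ∈ PiSet A, D ≤ klDiv p Q := fun p hp => csInf_le hbdd ⟨p, hp, rfl⟩
  have hPn : ∀ n : ℕ, (P {ω | empiricalType Z n ω ∈ PiSet A}).toReal
      = ∑ x ∈ Finset.univ.filter (fun x : Fin n → Fin (m+1) => typF n x ∈ PiSet A),
          ∏ j, Q (x j) := by
    intro n
    have hmt := measure_type_event P Z hmeas hindep Q (fun a => (hQpos a).le) hdist (PiSet A) n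
    have hev : {ω | empiricalType Z n ω ∈ PiSet A}
        = {ω | typF n (fun j : Fin n => Z j ω) ∈ PiSet A} := rfl
    rw [hev, hmt, ENNReal.toReal_ofReal]
    exact Finset.sum_nonneg fun x _ => Finset.prod_nonneg fun j _ => (hQpos (x j)).le
  rw [Metric.tendsto_atTop]
  intro ε hε
  -- Step 1: a point of Pi with KL close to the infimum
  obtain ⟨y, ⟨p, hpPi, rfl⟩, hylt⟩ :=
    Real.lt_sInf_add_pos himg_ne (show (0:ℝ) < ε/8 by linarith)
  -- Step 2: continuity of KL at p
  have hcont : ContinuousAt (fun r : Fin (m+1) → ℝ => klDiv r Q) p :=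
    (klDiv_continuous Q hQpos).continuousAt
  rw [Metric.continuousAt_iff] at hcont
  obtain ⟨δc, hδc, hball⟩ := hcont (ε/8) (by linarith)
  -- Step 3: regularity gives a strict-constraint point near p
  have hclos := hreg p hpPi
  rw [Metric.mem_closure_iff] at hclos
  obtain ⟨q0, hq0S, hdist0⟩ := hclos δc hδc
  obtain ⟨hq0simplex, i0, hc0⟩ := hq0S
  have hfq0 : klDiv q0 Q < D + ε/4 := by
    have hd : dist q0 p < δc := by rwa [dist_comm] at hdist0
    have := hball hd
    rw [Real.dist_eq] at this
    have h2 := abs_lt.mp this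
    linarith [h2.1, h2.2, hylt]
  -- Step 4: mix with the uniform distribution to get full support
  set c0 : ℝ := ∑ j, A i0 j * q0 j.castSucc with hc0def
  set s0 : ℝ := ∑ j, A i0 j * ((1:ℝ)/(m+1)) with hs0def
  set mix : ℝ → (Fin (m+1) → ℝ) :=
    fun δ a => (1-δ) * q0 a + δ * (1/(m+1)) with hmixdef
  have hmix0 : mix 0 = q0 := by
    funext a; simp [hmixdef]
  have hmixc : Continuous mix := by
    rw [hmixdef]
    refine continuous_pi fun a => ?_
    exact ((continuous_const.sub continuous_id).mul continuous_const).add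
      (continuous_id.mul continuous_const)
  have hmixcont : ContinuousAt (fun δ : ℝ => klDiv (mix δ) Q) 0 := by
    have h := ((klDiv_continuous Q hQpos).continuousAt (x := mix 0)).comp
      hmixc.continuousAt
    exact h
  rw [Metric.continuousAt_iff] at hmixcont
  obtain ⟨δ2, hδ2, hm⟩ := hmixcont (ε/8) (by linarith)
  set δ0 : ℝ := min (min (δ2/2) (1/2)) (c0/(2*(|s0 - c0|+1))) with hδ0def
  have habs0 : (0:ℝ) < |s0 - c0| + 1 := by positivity
  have hδ0pos : 0 < δ0 := by
    apply lt_min (lt_min (by linarith) (by norm_num))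
    positivity
  have hδ0half : δ0 ≤ 1/2 := le_trans (min_le_left _ _) (min_le_right _ _)
  have hδ0δ2 : δ0 < δ2 := lt_of_le_of_lt (le_trans (min_le_left _ _) (min_le_left _ _))
    (by linarith)
  have hδ0c0 : δ0 * |s0 - c0| ≤ c0/2 := by
    have h1 : δ0 ≤ c0/(2*(|s0 - c0|+1)) := min_le_right _ _
    have h2 : 0 ≤ |s0 - c0| := abs_nonneg _
    have h3 : δ0 * |s0 - c0| ≤ (c0/(2*(|s0 - c0|+1))) * |s0 - c0| :=
      mul_le_mul_of_nonneg_right h1 h2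
    have h4 : (c0/(2*(|s0 - c0|+1))) * |s0 - c0| ≤ c0/2 := by
      rw [div_mul_eq_mul_div, div_le_div_iff₀ (by positivity) (by norm_num)]
      nlinarith
    linarith
  set q : Fin (m+1) → ℝ := mix δ0 with hqdef
  have hMpos : (0:ℝ) < (m:ℝ)+1 := by positivity
  have hq_pos : ∀ a, 0 < q a := by
    intro a
    have h1 : 0 ≤ (1-δ0) * q0 a := by
      apply mul_nonneg (by linarith) (hq0simplex.1 a)
    have h2 : 0 < δ0 * (1/(m+1)) := by positivity
    simp only [hqdef, hmixdef]
    push_cast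
    linarith
  have hq_simplex : q ∈ stdSimplex ℝ (Fin (m+1)) := by
    refine ⟨fun a => (hq_pos a).le, ?_⟩
    simp only [hqdef, hmixdef]
    rw [Finset.sum_add_distrib, ← Finset.mul_sum, hq0simplex.2, Finset.sum_const,
      Finset.card_univ, Fintype.card_fin, nsmul_eq_mul]
    push_cast
    field_simp
    ring
  have hcq : 0 < ∑ j, A i0 j * q j.castSucc := by
    have hexp : ∑ j, A i0 j * q j.castSucc = (1-δ0) * c0 + δ0 * s0 := by
      simp only [hqdef, hmixdef, hc0def, hs0def]
      rw [Finset.mul_sum, Finset.mul_sum, ← Finset.sum_add_distrib]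
      refine Finset.sum_congr rfl fun j _ => ?_
      push_cast
      ring
    rw [hexp]
    have h5 : -(δ0 * |s0 - c0|) ≤ δ0 * (s0 - c0) := by
      have := neg_abs_le (s0 - c0)
      nlinarith
    nlinarith
  have hklq : klDiv q Q < D + ε/2 := by
    have hd : dist δ0 (0:ℝ) < δ2 := by
      rw [Real.dist_eq, sub_zero, abs_of_pos hδ0pos]
      exact hδ0δ2
    have := hm hd
    rw [hmix0, Real.dist_eq] at this
    have h2 := abs_lt.mp this
    have : klDiv (mix δ0) Q < klDiv q0 Q + ε/8 := by linarith [h2.2]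
    simp only [← hqdef] at this
    linarith
  clear hylt hball hδc hdist0 hfq0 hδ2 hm hmix0 habs0 hδ0pos hδ0half hδ0δ2 hδ0c0 hc0
    hqdef hmixc hmixcont hcont hclos
  clear_value q
  clear hmixdef hδ0def hc0def hs0def
  clear_value mix δ0 c0 s0
  clear mix δ0 c0 s0
  -- Step 5: choose δ3 for the neighborhood
  set c : ℝ := ∑ j, A i0 j * q j.castSucc with hcdef
  set SA : ℝ := ∑ j, |A i0 j| with hSAdef
  set SL : ℝ := ∑ a, |Real.log (q a / Q a)| with hSLdef
  have hSA0 : 0 ≤ SA := Finset.sum_nonneg fun j _ => abs_nonneg _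
  have hSL0 : 0 ≤ SL := Finset.sum_nonneg fun a _ => abs_nonneg _
  set δ3 : ℝ := min (c/(2*(SA+1))) ((ε/8)/(SL+1)) with hδ3def
  have hδ3pos : 0 < δ3 := by
    apply lt_min
    · positivity
    · positivity
  have hδ3SA : δ3 * SA ≤ c/2 := by
    have h1 : δ3 ≤ c/(2*(SA+1)) := min_le_left _ _
    have h3 : δ3 * SA ≤ (c/(2*(SA+1))) * SA := mul_le_mul_of_nonneg_right h1 hSA0
    have h4 : (c/(2*(SA+1))) * SA ≤ c/2 := by
      rw [div_mul_eq_mul_div, div_le_div_iff₀ (by positivity) (by norm_num)]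
      nlinarith [hcq]
    linarith
  have hδε : δ3 * SL ≤ ε/8 := by
    have h1 : δ3 ≤ (ε/8)/(SL+1) := min_le_right _ _
    have h3 : δ3 * SL ≤ ((ε/8)/(SL+1)) * SL := mul_le_mul_of_nonneg_right h1 hSL0
    have h4 : ((ε/8)/(SL+1)) * SL ≤ ε/8 := by
      rw [div_mul_eq_mul_div, div_le_div_iff₀ (by positivity) (by norm_num)]
      nlinarith
    linarith
  clear_value c SA SL δ3
  have hU : ∀ t : Fin (m+1) → ℝ, t ∈ stdSimplex ℝ (Fin (m+1)) →
      (∀ a, |t a - q a| ≤ δ3) → t ∈ PiSet A := by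
    intro t ht hclose
    refine ⟨ht, i0, ?_⟩
    have hsplit : ∑ j, A i0 j * t j.castSucc
        = c + ∑ j, A i0 j * (t j.castSucc - q j.castSucc) := by
      rw [hcdef, ← Finset.sum_add_distrib]
      refine Finset.sum_congr rfl fun j _ => by ring
    rw [hsplit]
    have hlow : -(δ3 * SA) ≤ ∑ j, A i0 j * (t j.castSucc - q j.castSucc) := by
      rw [hSAdef, Finset.mul_sum, ← Finset.sum_neg_distrib]
      refine Finset.sum_le_sum fun j _ => ?_
      have h1 : |A i0 j * (t j.castSucc - q j.castSucc)| ≤ |A i0 j| * δ3 := by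
        rw [abs_mul]
        exact mul_le_mul_of_nonneg_left (hclose _) (abs_nonneg _)
      have h2 := neg_abs_le (A i0 j * (t j.castSucc - q j.castSucc))
      nlinarith
    nlinarith [hcq]
  have hδε' : δ3 * ∑ a, |Real.log (q a / Q a)| ≤ ε/8 := by
    rw [← hSLdef]; exact hδε
  clear hδ3SA hδε hSA0 hSL0 hcq hδ3def hcdef hSAdef hSLdef
  clear c SA SL
  -- Step 6: choose N
  have hlogt := tendsto_log_succ_div ((m:ℝ)+1)
  rw [Metric.tendsto_atTop] at hlogt
  obtain ⟨N1, hN1⟩ := hlogt (ε/4) (by linarith)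
  have hlog2t := tendsto_const_div_atTop_nhds_zero_nat (Real.log 2)
  rw [Metric.tendsto_atTop] at hlog2t
  obtain ⟨N2, hN2⟩ := hlog2t (ε/4) (by linarith)
  set N3 : ℕ := ⌈(4*((m:ℝ)+1))/δ3^2⌉₊ + 1 with hN3def
  refine ⟨max (max N1 N2) (max N3 1), fun n hn => ?_⟩
  have hnN1 : n ≥ N1 := le_trans (le_trans (le_max_left _ _) (le_max_left _ _)) hn
  have hnN2 : n ≥ N2 := le_trans (le_trans (le_max_right _ _) (le_max_left _ _)) hn
  have hnN3 : n ≥ N3 := le_trans (le_trans (le_max_left _ _) (le_max_right _ _)) hn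
  have hn1 : n ≥ 1 := le_trans (le_trans (le_max_right _ _) (le_max_right _ _)) hn
  have hn0 : n ≠ 0 := Nat.one_le_iff_ne_zero.mp hn1
  have hnR : (0:ℝ) < n := by exact_mod_cast Nat.pos_of_ne_zero hn0
  -- the fraction bound
  have hfrac : ((m:ℝ)+1) / ((n:ℝ) * δ3^2) ≤ 1/2 := by
    have h1 : ((4*((m:ℝ)+1))/δ3^2) ≤ (N3 : ℝ) := by
      rw [hN3def]
      push_cast
      linarith [Nat.le_ceil ((4*((m:ℝ)+1))/δ3^2)]
    have h2 : ((4*((m:ℝ)+1))/δ3^2) ≤ (n:ℝ) := by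
      refine le_trans h1 ?_
      exact_mod_cast hnN3
    rw [div_le_div_iff₀ (by positivity) (by norm_num)]
    have h3 : 4*((m:ℝ)+1) ≤ (n:ℝ) * δ3^2 := by
      rw [div_le_iff₀ (by positivity)] at h2
      nlinarith
    nlinarith
  -- lower bound for S_n
  have hlb := sanov_lower (M := m+1) (n := n) hn0 Q q hQpos hq_simplex hq_pos
    (PiSet A) δ3 hδ3pos hU (ε/8) hδε'
  have hub := sanov_upper (M := m+1) (n := n) hn0 Q hQpos (PiSet A) D hDle
  set Sn : ℝ := ∑ x ∈ Finset.univ.filter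
    (fun x : Fin n → Fin (m+1) => typF n x ∈ PiSet A), ∏ j, Q (x j) with hSndef
  have hcast : ((m+1 : ℕ) : ℝ) = (m:ℝ)+1 := by push_cast; ring
  have hSnlb : (1/2) * Real.exp (-((n:ℝ) * (klDiv q Q + ε/8))) ≤ Sn := by
    have h1 : (1:ℝ)/2 ≤ 1 - ((m+1:ℕ):ℝ) / ((n:ℝ) * δ3^2) := by
      rw [hcast]; linarith
    calc (1/2) * Real.exp (-((n:ℝ) * (klDiv q Q + ε/8)))
        ≤ (1 - ((m+1:ℕ):ℝ) / ((n:ℝ) * δ3^2)) * Real.exp (-((n:ℝ) * (klDiv q Q + ε/8))) :=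
          mul_le_mul_of_nonneg_right h1 (Real.exp_nonneg _)
      _ ≤ Sn := hlb
  have hSnpos : 0 < Sn :=
    lt_of_lt_of_le (by positivity) hSnlb
  -- rewrite the goal
  have hgoal : (P {ω | empiricalType Z n ω ∈ PiSet A}).toReal = Sn := hPn n
  rw [hgoal]
  -- log bounds
  have hlogup : Real.log Sn ≤ ((m:ℝ)+1) * Real.log ((n:ℝ)+1) - (n:ℝ)*D := by
    have h1 := Real.log_le_log hSnpos hub
    rw [Real.log_mul (by positivity) (Real.exp_ne_zero _), Real.log_pow,
      Real.log_exp] at h1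
    rw [hcast] at h1
    linarith
  have hloglo : Real.log (1/2) - (n:ℝ)*(klDiv q Q + ε/8) ≤ Real.log Sn := by
    have h1 := Real.log_le_log (by positivity :
      (0:ℝ) < (1/2) * Real.exp (-((n:ℝ) * (klDiv q Q + ε/8)))) hSnlb
    rw [Real.log_mul (by norm_num) (Real.exp_ne_zero _), Real.log_exp] at h1
    linarith
  -- numeric bounds from N1, N2
  have hb1 : ((m:ℝ)+1) * Real.log ((n:ℝ)+1) / (n:ℝ) < ε/4 := by
    have := hN1 n hnN1
    rw [Real.dist_eq, sub_zero] at this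
    calc ((m:ℝ)+1) * Real.log ((n:ℝ)+1) / (n:ℝ)
        ≤ |((m:ℝ)+1) * Real.log ((n:ℝ)+1) / (n:ℝ)| := le_abs_self _
      _ < ε/4 := this
  have hb2 : Real.log 2 / (n:ℝ) < ε/4 := by
    have := hN2 n hnN2
    rw [Real.dist_eq, sub_zero] at this
    calc Real.log 2 / (n:ℝ) ≤ |Real.log 2 / (n:ℝ)| := le_abs_self _
      _ < ε/4 := this
  -- final arithmetic
  rw [Real.dist_eq, abs_lt]
  have hup : (1/(n:ℝ)) * Real.log Sn ≤ ((m:ℝ)+1) * Real.log ((n:ℝ)+1) / (n:ℝ) - D := by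
    have h1 : (1/(n:ℝ)) * Real.log Sn
        ≤ (1/(n:ℝ)) * (((m:ℝ)+1) * Real.log ((n:ℝ)+1) - (n:ℝ)*D) :=
      mul_le_mul_of_nonneg_left hlogup (by positivity)
    have h2 : (1/(n:ℝ)) * (((m:ℝ)+1) * Real.log ((n:ℝ)+1) - (n:ℝ)*D)
        = ((m:ℝ)+1) * Real.log ((n:ℝ)+1) / (n:ℝ) - D := by
      field_simp
    linarith
  have hlo : - (Real.log 2 / (n:ℝ)) - (klDiv q Q + ε/8) ≤ (1/(n:ℝ)) * Real.log Sn := by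
    have h1 : (1/(n:ℝ)) * (Real.log (1/2) - (n:ℝ)*(klDiv q Q + ε/8))
        ≤ (1/(n:ℝ)) * Real.log Sn :=
      mul_le_mul_of_nonneg_left hloglo (by positivity)
    have hlog12 : Real.log (1/2) = - Real.log 2 := by
      rw [one_div, Real.log_inv]
    have h2 : (1/(n:ℝ)) * (Real.log (1/2) - (n:ℝ)*(klDiv q Q + ε/8))
        = - (Real.log 2 / (n:ℝ)) - (klDiv q Q + ε/8) := by
      rw [hlog12]
      field_simp
      try ring
    linarith
  constructor
  · -- -ε < a + D
    have : klDiv q Q + ε/8 < D + ε/2 + ε/8 := by linarith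
    nlinarith [hlo, hb2]
  · -- a + D < ε
    nlinarith [hup, hb1]


end
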